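/- Let C be a combinatorial code on n neurons and let i ∈ [n] be a neuron with tk_C({i}) ≠ ∅. Then i is redundant in C if and only if tk_C({i}) = tk_C(√[C]{i} ∖ {i}), where √[C]{i} is the root of {i} relative to C. -/
import Mathlib


/-- The trunk of `τ` in the code `C`: all codewords containing `τ`. -/
def trunk {n : ℕ} (C : Finset (Finset (Fin n))) (τ : Finset (Fin n)) :
    Finset (Finset (Fin n)) :=
  C.filter (fun σ => τ ⊆ σ)

/-- The root of a family of subsets of `[n]`: the intersection of all its members
(the full set `[n]` if the family is empty). -/
def root {n : ℕ} (S : Finset (Finset (Fin n))) : Finset (Fin n) :=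
  S.inf id

/-- The root of `τ` relative to `C`: the intersection of all codewords
containing `τ`. -/
def rootRel {n : ℕ} (C : Finset (Finset (Fin n))) (τ : Finset (Fin n)) :
    Finset (Fin n) :=
  root (trunk C τ)

lemma mem_trunk_iff {n : ℕ} {C : Finset (Finset (Fin n))} {τ σ : Finset (Fin n)} :
    σ ∈ trunk C τ ↔ σ ∈ C ∧ τ ⊆ σ := Finset.mem_filter

/-- Redundancy Lemma: a neuron `i` with nonempty trunk is redundant (i.e. redundant
to some `σ ⊆ [n] ∖ {i}`) if and only if `tk_C({i}) = tk_C(√[C]{i} ∖ {i})`. -/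
theorem redundant_iff_trunk_rootRel_erase (n : ℕ) (C : Finset (Finset (Fin n)))
    (i : Fin n) (h : (trunk C {i}).Nonempty) :
    (∃ σ : Finset (Fin n), i ∉ σ ∧ trunk C {i} = trunk C σ) ↔
      trunk C {i} = trunk C ((rootRel C {i}).erase i) := by
  constructor
  · rintro ⟨σ, hiσ, hσ⟩
    -- σ ⊆ rootRel C {i}
    have hsub : σ ⊆ rootRel C {i} := by
      apply Finset.le_iff_subset.mp
      apply Finset.le_inf
      intro τ hτ
      rw [hσ] at hτ
      exact (mem_trunk_iff.mp hτ).2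
    have hsub' : σ ⊆ (rootRel C {i}).erase i := fun x hx =>
      Finset.mem_erase.mpr ⟨fun hxi => hiσ (hxi ▸ hx), hsub hx⟩
    apply Finset.ext
    intro τ
    rw [mem_trunk_iff, mem_trunk_iff]
    constructor
    · rintro ⟨hC, hiτ⟩
      refine ⟨hC, ?_⟩
      intro x hx
      exact Finset.le_iff_subset.mp (Finset.inf_le (mem_trunk_iff.mpr ⟨hC, hiτ⟩))
        (Finset.mem_erase.mp hx).2
    · rintro ⟨hC, hτ⟩
      have : σ ⊆ τ := hsub'.trans hτ
      have : τ ∈ trunk C σ := mem_trunk_iff.mpr ⟨hC, this⟩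
      rw [← hσ] at this
      exact ⟨hC, (mem_trunk_iff.mp this).2⟩
  · intro heq
    exact ⟨(rootRel C {i}).erase i, Finset.notMem_erase i _, heq⟩
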